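/- For every n ∈ ℕ, ρ̄ⁿ ≤ ρ̄^{n+1}, where ρ̄ⁿ is the infimum over all 2ⁿ×2ⁿ stochastic matrices p of max_{m∈{1,…,2ⁿ}} Σ_{h=1}^{2ⁿ} 2ⁿ λ^{(n)}_h p_{h,m} / μ̂^{(n)}_{h,m}. -/

import Mathlib

open MeasureTheory Set Finset

/-- Integral of the arrival rate function over the `h`-th dyadic subinterval of
`[0,1]` at level `n`: `λ^{(n)}_h = ∫_{h/2ⁿ}^{(h+1)/2ⁿ} λ(x) dx`. -/
noncomputable def lamDyadic (lam : ℝ → ℝ) (n : ℕ) (h : Fin (2 ^ n)) : ℝ :=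
  ∫ x in (((h : ℕ) : ℝ) / 2 ^ n)..((((h : ℕ) : ℝ) + 1) / 2 ^ n), lam x

/-- Maximum of `f` on the dyadic square
`[h/2ⁿ,(h+1)/2ⁿ] × [m/2ⁿ,(m+1)/2ⁿ]`, realized as the `sSup` of the image. -/
noncomputable def muHatDyadic (f : ℝ × ℝ → ℝ) (n : ℕ) (h m : Fin (2 ^ n)) : ℝ :=
  sSup (f '' (Icc (((h : ℕ) : ℝ) / 2 ^ n) ((((h : ℕ) : ℝ) + 1) / 2 ^ n) ×ˢ
              Icc (((m : ℕ) : ℝ) / 2 ^ n) ((((m : ℕ) : ℝ) + 1) / 2 ^ n)))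

/-- A matrix with entries in `[0,1]` and unit row sums. -/
def IsStochastic {H M : ℕ} (p : Fin H → Fin M → ℝ) : Prop :=
  (∀ h m, 0 ≤ p h m ∧ p h m ≤ 1) ∧ ∀ h, ∑ m, p h m = 1

/-- `ρ̄ⁿ`: the infimum over all `2ⁿ×2ⁿ` stochastic matrices `p` of
`max_m Σ_h 2ⁿ λ^{(n)}_h p_{h,m} / μ̂^{(n)}_{h,m}`. -/
noncomputable def rhoBar (f : ℝ × ℝ → ℝ) (lam : ℝ → ℝ) (n : ℕ) : ℝ :=
  sInf { r : ℝ | ∃ p : Fin (2 ^ n) → Fin (2 ^ n) → ℝ, IsStochastic p ∧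
    r = ⨆ m : Fin (2 ^ n), ∑ h : Fin (2 ^ n),
      (2 ^ n : ℝ) * lamDyadic lam n h * p h m / muHatDyadic f n h m }

namespace Stmt11Aux

/-- The `j`-th fine subindex of coarse index `h`. -/
def fidx (n : ℕ) (h : Fin (2 ^ n)) (j : Fin 2) : Fin (2 ^ (n + 1)) :=
  ⟨2 * h + j, by have h1 := h.isLt; have h2 := j.isLt; rw [pow_succ]; omega⟩

lemma fidx_cast (n : ℕ) (h : Fin (2 ^ n)) (j : Fin 2) :
    ((fidx n h j : ℕ) : ℝ) = 2 * ((h : ℕ) : ℝ) + ((j : ℕ) : ℝ) := by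
  simp [fidx]

lemma fidx_bijective (n : ℕ) :
    Function.Bijective (fun x : Fin (2 ^ n) × Fin 2 => fidx n x.1 x.2) := by
  rw [Fintype.bijective_iff_injective_and_card]
  constructor
  · rintro ⟨a, b⟩ ⟨c, d⟩ hx
    simp only [fidx, Fin.mk.injEq] at hx
    have hb := b.isLt; have hd := d.isLt
    have : (a : ℕ) = c ∧ (b : ℕ) = d := by omega
    exact Prod.ext (Fin.ext this.1) (Fin.ext this.2)
  · simp [pow_succ, mul_comm]

lemma sum_split {M : Type*} [AddCommMonoid M] (n : ℕ) (g : Fin (2 ^ (n + 1)) → M) :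
    ∑ h', g h' = ∑ h : Fin (2 ^ n), ∑ j : Fin 2, g (fidx n h j) := by
  have e := Fintype.sum_bijective _ (fidx_bijective n)
      (fun x : Fin (2 ^ n) × Fin 2 => g (fidx n x.1 x.2)) g (fun x => rfl)
  rw [← e, Fintype.sum_prod_type]

lemma dyIcc_subset (n : ℕ) (h : Fin (2 ^ n)) :
    Icc (((h : ℕ) : ℝ) / 2 ^ n) ((((h : ℕ) : ℝ) + 1) / 2 ^ n) ⊆ Icc (0 : ℝ) 1 := by
  apply Set.Icc_subset_Icc (by positivity)
  rw [div_le_one (by positivity)]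
  have := h.isLt
  exact_mod_cast Nat.succ_le_of_lt this

lemma dyIcc_le (n : ℕ) (h : Fin (2 ^ n)) :
    ((h : ℕ) : ℝ) / 2 ^ n ≤ (((h : ℕ) : ℝ) + 1) / 2 ^ n := by
  gcongr; linarith

lemma fine_Icc_subset (n : ℕ) (h : Fin (2 ^ n)) (j : Fin 2) :
    Icc (((fidx n h j : ℕ) : ℝ) / 2 ^ (n + 1)) ((((fidx n h j : ℕ) : ℝ) + 1) / 2 ^ (n + 1)) ⊆
    Icc (((h : ℕ) : ℝ) / 2 ^ n) ((((h : ℕ) : ℝ) + 1) / 2 ^ n) := by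
  have hj : ((j : ℕ) : ℝ) ≤ 1 := by
    have := j.isLt; exact_mod_cast Nat.lt_succ_iff.mp this
  have hj0 : (0 : ℝ) ≤ ((j : ℕ) : ℝ) := by positivity
  have e1 : ((h : ℕ) : ℝ) / 2 ^ n = (2 * ((h : ℕ) : ℝ)) / 2 ^ (n + 1) := by
    rw [pow_succ]; field_simp
  have e2 : (((h : ℕ) : ℝ) + 1) / 2 ^ n = (2 * ((h : ℕ) : ℝ) + 2) / 2 ^ (n + 1) := by
    rw [pow_succ]; field_simp
  rw [e1, e2, fidx_cast]
  exact Set.Icc_subset_Icc ((div_le_div_iff_of_pos_right (by positivity)).2 (by linarith))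
    ((div_le_div_iff_of_pos_right (by positivity)).2 (by linarith))

lemma sq_nonempty (n : ℕ) (h m : Fin (2 ^ n)) :
    (Icc (((h : ℕ) : ℝ) / 2 ^ n) ((((h : ℕ) : ℝ) + 1) / 2 ^ n) ×ˢ
     Icc (((m : ℕ) : ℝ) / 2 ^ n) ((((m : ℕ) : ℝ) + 1) / 2 ^ n)).Nonempty :=
  (Set.nonempty_Icc.2 (dyIcc_le n h)).prod (Set.nonempty_Icc.2 (dyIcc_le n m))

lemma sq_subset (n : ℕ) (h m : Fin (2 ^ n)) :
    (Icc (((h : ℕ) : ℝ) / 2 ^ n) ((((h : ℕ) : ℝ) + 1) / 2 ^ n) ×ˢ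
     Icc (((m : ℕ) : ℝ) / 2 ^ n) ((((m : ℕ) : ℝ) + 1) / 2 ^ n)) ⊆
    Icc (0 : ℝ) 1 ×ˢ Icc (0 : ℝ) 1 :=
  prod_mono (dyIcc_subset n h) (dyIcc_subset n m)

variable {f : ℝ × ℝ → ℝ}

lemma muHat_bddAbove (hf : ContinuousOn f (Icc (0:ℝ) 1 ×ˢ Icc (0:ℝ) 1))
    (n : ℕ) (h m : Fin (2 ^ n)) :
    BddAbove (f '' (Icc (((h : ℕ) : ℝ) / 2 ^ n) ((((h : ℕ) : ℝ) + 1) / 2 ^ n) ×ˢ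
              Icc (((m : ℕ) : ℝ) / 2 ^ n) ((((m : ℕ) : ℝ) + 1) / 2 ^ n))) :=
  ((isCompact_Icc.prod isCompact_Icc).image_of_continuousOn
    (hf.mono (sq_subset n h m))).bddAbove

lemma muHat_pos (hf : ContinuousOn f (Icc (0:ℝ) 1 ×ˢ Icc (0:ℝ) 1))
    (hfpos : ∀ z ∈ Icc (0:ℝ) 1 ×ˢ Icc (0:ℝ) 1, 0 < f z)
    (n : ℕ) (h m : Fin (2 ^ n)) : 0 < muHatDyadic f n h m := by
  obtain ⟨z, hz⟩ := sq_nonempty n h m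
  calc (0 : ℝ) < f z := hfpos z (sq_subset n h m hz)
    _ ≤ muHatDyadic f n h m := le_csSup (muHat_bddAbove hf n h m) (mem_image_of_mem f hz)

lemma muHat_le (hf : ContinuousOn f (Icc (0:ℝ) 1 ×ˢ Icc (0:ℝ) 1))
    (n : ℕ) (h m : Fin (2 ^ n)) (j k : Fin 2) :
    muHatDyadic f (n + 1) (fidx n h j) (fidx n m k) ≤ muHatDyadic f n h m := by
  apply csSup_le_csSup (muHat_bddAbove hf n h m)
    ((sq_nonempty (n + 1) (fidx n h j) (fidx n m k)).image f)
  exact image_mono (prod_mono (fine_Icc_subset n h j) (fine_Icc_subset n m k))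

variable {lam : ℝ → ℝ}

lemma lamDyadic_nonneg (hlam : ∀ x ∈ Icc (0:ℝ) 1, 0 ≤ lam x) (n : ℕ) (h : Fin (2 ^ n)) :
    0 ≤ lamDyadic lam n h := by
  apply intervalIntegral.integral_nonneg (dyIcc_le n h)
  intro x hx; exact hlam x (dyIcc_subset n h hx)

lemma intInt (hint : IntegrableOn lam (Icc 0 1)) {a b : ℝ}
    (h1 : 0 ≤ a) (hab : a ≤ b) (h2 : b ≤ 1) : IntervalIntegrable lam volume a b := by
  apply (hint.mono_set ?_).intervalIntegrable
  rw [uIcc_of_le hab]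
  exact Icc_subset_Icc h1 h2

lemma lamDyadic_split (hint : IntegrableOn lam (Icc 0 1)) (n : ℕ) (h : Fin (2 ^ n)) :
    lamDyadic lam n h =
      lamDyadic lam (n + 1) (fidx n h 0) + lamDyadic lam (n + 1) (fidx n h 1) := by
  have e0 : ((fidx n h 0 : ℕ) : ℝ) = 2 * ((h : ℕ) : ℝ) := by rw [fidx_cast]; norm_num
  have e1 : ((fidx n h 1 : ℕ) : ℝ) = 2 * ((h : ℕ) : ℝ) + 1 := by rw [fidx_cast]; norm_num
  have ea : (2 * ((h : ℕ) : ℝ)) / 2 ^ (n + 1) = ((h : ℕ) : ℝ) / 2 ^ n := by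
    rw [pow_succ]; field_simp
  have eb : (2 * ((h : ℕ) : ℝ) + 1 + 1) / 2 ^ (n + 1) = (((h : ℕ) : ℝ) + 1) / 2 ^ n := by
    rw [pow_succ]; field_simp; ring
  have hmem := dyIcc_subset n h
  have h0 : (0 : ℝ) ≤ ((h : ℕ) : ℝ) / 2 ^ n := by positivity
  have h1' : (((h : ℕ) : ℝ) + 1) / 2 ^ n ≤ 1 := by
    have := hmem (Set.right_mem_Icc.2 (dyIcc_le n h)); exact this.2
  have hc1 : ((h : ℕ) : ℝ) / 2 ^ n ≤ (2 * ((h : ℕ) : ℝ) + 1) / 2 ^ (n + 1) := by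
    rw [← ea]; gcongr; linarith
  have hc2 : (2 * ((h : ℕ) : ℝ) + 1) / 2 ^ (n + 1) ≤ (((h : ℕ) : ℝ) + 1) / 2 ^ n := by
    rw [← eb]; gcongr; linarith
  unfold lamDyadic
  rw [e0, e1, ea, eb]
  exact (intervalIntegral.integral_add_adjacent_intervals
    (intInt hint h0 hc1 (hc2.trans h1'))
    (intInt hint (h0.trans hc1) hc2 h1')).symm

end Stmt11Aux


namespace Stmt11Aux

lemma triple_reorg {M : Type*} [AddCommMonoid M] (n : ℕ) (g : Fin (2 ^ (n + 1)) → Fin 2 → M) :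
    ∑ h : Fin (2 ^ n), ∑ j : Fin 2, ∑ k : Fin 2, g (fidx n h j) k
      = ∑ k : Fin 2, ∑ h' : Fin (2 ^ (n + 1)), g h' k :=
  calc ∑ h : Fin (2 ^ n), ∑ j : Fin 2, ∑ k : Fin 2, g (fidx n h j) k
      = ∑ h : Fin (2 ^ n), ∑ k : Fin 2, ∑ j : Fin 2, g (fidx n h j) k :=
        Finset.sum_congr rfl fun h _ => Finset.sum_comm
    _ = ∑ k : Fin 2, ∑ h : Fin (2 ^ n), ∑ j : Fin 2, g (fidx n h j) k := Finset.sum_comm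
    _ = ∑ k : Fin 2, ∑ h' : Fin (2 ^ (n + 1)), g h' k :=
        Finset.sum_congr rfl fun k _ => (sum_split n fun h' => g h' k).symm

end Stmt11Aux

open Stmt11Aux in
/-- `ρ̄ⁿ ≤ ρ̄^{n+1}` for every `n` (monotonicity of the best-case
dyadic load under refinement, second claim of Lemma C.1). -/
theorem stmt11 (f : ℝ × ℝ → ℝ)
    (hf : ContinuousOn f (Icc (0:ℝ) 1 ×ˢ Icc (0:ℝ) 1))
    (hfpos : ∀ z ∈ Icc (0:ℝ) 1 ×ˢ Icc (0:ℝ) 1, 0 < f z)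
    (lam : ℝ → ℝ) (hlam : ∀ x ∈ Icc (0:ℝ) 1, 0 ≤ lam x)
    (hint : IntegrableOn lam (Icc 0 1)) (n : ℕ) :
    rhoBar f lam n ≤ rhoBar f lam (n + 1) := by
  classical
  haveI h1 : Nonempty (Fin (2 ^ n)) := ⟨⟨0, by positivity⟩⟩
  haveI h2 : Nonempty (Fin (2 ^ (n + 1))) := ⟨⟨0, by positivity⟩⟩
  -- the coarse set is bounded below by 0
  have hbdd : BddBelow { r : ℝ | ∃ p : Fin (2 ^ n) → Fin (2 ^ n) → ℝ, IsStochastic p ∧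
      r = ⨆ m : Fin (2 ^ n), ∑ h : Fin (2 ^ n),
        (2 ^ n : ℝ) * lamDyadic lam n h * p h m / muHatDyadic f n h m } := by
    refine ⟨0, ?_⟩
    rintro r ⟨p, ⟨hp01, _⟩, rfl⟩
    have hterm : ∀ m : Fin (2 ^ n), (0:ℝ) ≤ ∑ h : Fin (2 ^ n),
        (2 ^ n : ℝ) * lamDyadic lam n h * p h m / muHatDyadic f n h m := by
      intro m
      refine Finset.sum_nonneg fun h _ => div_nonneg ?_ (muHat_pos hf hfpos n h m).le
      have := lamDyadic_nonneg hlam n h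
      have := (hp01 h m).1
      positivity
    obtain ⟨m0⟩ := h1
    exact le_trans (hterm m0)
      (le_ciSup (f := fun m : Fin (2 ^ n) => ∑ h : Fin (2 ^ n),
        (2 ^ n : ℝ) * lamDyadic lam n h * p h m / muHatDyadic f n h m)
        (Set.Finite.bddAbove (Set.finite_range _)) m0)
  rw [rhoBar, rhoBar]
  apply le_csInf
  · -- nonemptiness of the fine set: uniform matrix
    refine ⟨_, fun _ _ => ((2 : ℝ) ^ (n + 1))⁻¹, ⟨fun h m => ⟨by positivity, ?_⟩, fun h => ?_⟩, rfl⟩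
    · exact inv_le_one_of_one_le₀ (one_le_pow₀ (by norm_num))
    · rw [Finset.sum_const, Finset.card_univ, Fintype.card_fin, nsmul_eq_mul]
      push_cast
      exact mul_inv_cancel₀ (by positivity)
  · rintro r ⟨p, ⟨hp01, hprow⟩, rfl⟩
    set L : Fin (2 ^ (n + 1)) → ℝ := lamDyadic lam (n + 1) with hLdef
    set Λ : Fin (2 ^ n) → ℝ := lamDyadic lam n with hΛdef
    have hLnn : ∀ h', 0 ≤ L h' := lamDyadic_nonneg hlam (n + 1)
    have hΛnn : ∀ h, 0 ≤ Λ h := lamDyadic_nonneg hlam n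
    have hsplit : ∀ h, Λ h = L (fidx n h 0) + L (fidx n h 1) := lamDyadic_split hint n
    set w : Fin (2 ^ n) → Fin 2 → ℝ :=
      fun h j => if Λ h = 0 then 1 / 2 else L (fidx n h j) / Λ h with hwdef
    have hw_nn : ∀ h j, 0 ≤ w h j := by
      intro h j
      simp only [hwdef]
      split
      · norm_num
      · exact div_nonneg (hLnn _) (hΛnn h)
    have hw_sum : ∀ h, w h 0 + w h 1 = 1 := by
      intro h
      simp only [hwdef]
      split
      · norm_num
      · rename_i hz
        rw [← add_div, ← hsplit h, div_self hz]
    have hw_key : ∀ h j, Λ h * w h j = L (fidx n h j) := by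
      intro h j
      simp only [hwdef]
      split
      · rename_i hz
        have h0 := hLnn (fidx n h 0)
        have h1' := hLnn (fidx n h 1)
        have hs := hsplit h
        rw [hz] at hs
        have hLj : L (fidx n h j) = 0 := by
          have hj2 : j = 0 ∨ j = 1 := by omega
          rcases hj2 with rfl | rfl
          · linarith
          · linarith
        rw [hz, hLj]; ring
      · rename_i hz
        field_simp
    -- column pair sums
    set s : Fin (2 ^ (n + 1)) → Fin (2 ^ n) → ℝ :=
      fun a m => ∑ k : Fin 2, p a (fidx n m k) with hsdef
    have hs_nn : ∀ a m, 0 ≤ s a m :=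
      fun a m => Finset.sum_nonneg fun k _ => (hp01 a _).1
    have hs_total : ∀ a, ∑ m : Fin (2 ^ n), s a m = 1 := by
      intro a
      simp only [hsdef]
      rw [← sum_split n (fun m' => p a m')]
      exact hprow a
    have hs_le : ∀ a m, s a m ≤ 1 := by
      intro a m
      calc s a m ≤ ∑ m' : Fin (2 ^ n), s a m' :=
            Finset.single_le_sum (fun m' _ => hs_nn a m') (Finset.mem_univ m)
        _ = 1 := hs_total a
    set q : Fin (2 ^ n) → Fin (2 ^ n) → ℝ :=
      fun h m => ∑ j : Fin 2, w h j * s (fidx n h j) m with hqdef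
    have hq_stoch : IsStochastic q := by
      constructor
      · intro h m
        constructor
        · exact Finset.sum_nonneg fun j _ => mul_nonneg (hw_nn h j) (hs_nn _ m)
        · calc q h m ≤ ∑ j : Fin 2, w h j * 1 :=
              Finset.sum_le_sum fun j _ => mul_le_mul_of_nonneg_left (hs_le _ m) (hw_nn h j)
            _ = 1 := by rw [Fin.sum_univ_two]; simpa using hw_sum h
      · intro h
        simp only [hqdef]
        rw [Finset.sum_comm]
        calc ∑ j : Fin 2, ∑ m : Fin (2 ^ n), w h j * s (fidx n h j) m
            = ∑ j : Fin 2, w h j * ∑ m : Fin (2 ^ n), s (fidx n h j) m := by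
              simp [Finset.mul_sum]
          _ = ∑ j : Fin 2, w h j := by simp [hs_total]
          _ = 1 := by rw [Fin.sum_univ_two]; exact hw_sum h
    refine le_trans (csInf_le hbdd ⟨q, hq_stoch, rfl⟩) ?_
    -- main estimate
    set F : Fin (2 ^ (n + 1)) → ℝ := fun m' => ∑ h' : Fin (2 ^ (n + 1)),
      (2 ^ (n + 1) : ℝ) * L h' * p h' m' / muHatDyadic f (n + 1) h' m' with hFdef
    have hFbdd : BddAbove (Set.range F) := Set.Finite.bddAbove (Set.finite_range F)
    apply ciSup_le
    intro m
    have key : ∑ h : Fin (2 ^ n), (2 ^ n : ℝ) * Λ h * q h m / muHatDyadic f n h m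
        ≤ (∑ k : Fin 2, F (fidx n m k)) / 2 := by
      have step : ∀ h : Fin (2 ^ n),
          (2 ^ n : ℝ) * Λ h * q h m / muHatDyadic f n h m
          ≤ ∑ j : Fin 2, ∑ k : Fin 2,
            ((2 ^ (n + 1) : ℝ) * L (fidx n h j) * p (fidx n h j) (fidx n m k) /
              muHatDyadic f (n + 1) (fidx n h j) (fidx n m k)) / 2 := by
        intro h
        have lhs_eq : (2 ^ n : ℝ) * Λ h * q h m / muHatDyadic f n h m
            = ∑ j : Fin 2, ∑ k : Fin 2,
              ((2 ^ (n + 1) : ℝ) * L (fidx n h j) * p (fidx n h j) (fidx n m k) /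
                muHatDyadic f n h m) / 2 := by
          simp only [hqdef, hsdef]
          rw [Finset.mul_sum, Finset.sum_div]
          refine Finset.sum_congr rfl fun j _ => ?_
          rw [← hw_key h j, Finset.mul_sum, Finset.mul_sum, Finset.sum_div]
          refine Finset.sum_congr rfl fun k _ => ?_
          rw [pow_succ]
          ring
        rw [lhs_eq]
        refine Finset.sum_le_sum fun j _ => Finset.sum_le_sum fun k _ => ?_
        have hnum : (0:ℝ) ≤ (2 ^ (n + 1) : ℝ) * L (fidx n h j) * p (fidx n h j) (fidx n m k) := by
          have := hLnn (fidx n h j)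
          have := (hp01 (fidx n h j) (fidx n m k)).1
          positivity
        have hfin := muHat_pos hf hfpos (n + 1) (fidx n h j) (fidx n m k)
        have hle := muHat_le hf n h m j k
        gcongr
      calc ∑ h : Fin (2 ^ n), (2 ^ n : ℝ) * Λ h * q h m / muHatDyadic f n h m
          ≤ ∑ h : Fin (2 ^ n), ∑ j : Fin 2, ∑ k : Fin 2,
            ((2 ^ (n + 1) : ℝ) * L (fidx n h j) * p (fidx n h j) (fidx n m k) /
              muHatDyadic f (n + 1) (fidx n h j) (fidx n m k)) / 2 :=
            Finset.sum_le_sum fun h _ => step h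
        _ = (∑ k : Fin 2, F (fidx n m k)) / 2 := by
            simp only [← Finset.sum_div]
            congr 1
            simp only [hFdef]
            exact triple_reorg n (fun h' k =>
              (2 ^ (n + 1) : ℝ) * L h' * p h' (fidx n m k) /
                muHatDyadic f (n + 1) h' (fidx n m k))
    refine key.trans ?_
    have hb0 : F (fidx n m 0) ≤ ⨆ m', F m' := le_ciSup hFbdd _
    have hb1 : F (fidx n m 1) ≤ ⨆ m', F m' := le_ciSup hFbdd _
    rw [Fin.sum_univ_two]
    linarith
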